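/- Let {X^r = Σ_n w_n^r α^n}_{r=1,...,R} be a solution of the system X^r = ∅ + sign(η_r)·α·B_+^{a_r}(X^r ⧢_Θ Q), Q = Π_{r'=1}^R (X^{r'})^{⧢_Θ η_{r'}}, in H_W[[α]], and let φ = exp_⋆(Lσ) : H_W → ℂ[L] be the Feynman rules associated to an infinitesimal character σ with σ(∅) = 0. Then the log expansion G^r(α,L) = Σ_n φ(w_n^r) α^n is of triangular form: for each n the coefficient φ(w_n^r) is a polynomial of degree at most n in L, i.e. G^r(α,L) = Σ_{i≥0} Σ_{j=0}^{i} b^r_{i,j} α^i L^j for some b^r_{i,j} ∈ ℂ. -/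

import Mathlib

open scoped TensorProduct
noncomputable section

variable {Ω : Type*}

/-- The free `ℂ`-vector space on words over the alphabet `Ω`. -/
abbrev HW (Ω : Type*) := List Ω →₀ ℂ

/-- Quasi-shuffle product of two words. -/
def qshW (Θ : Ω → Ω → Ω) : List Ω → List Ω → HW Ω
  | [], v => Finsupp.single v 1
  | u, [] => Finsupp.single u 1
  | a :: u, b :: v =>
      Finsupp.mapDomain (a :: ·) (qshW Θ u (b :: v)) +
      Finsupp.mapDomain (b :: ·) (qshW Θ (a :: u) v) +
      Finsupp.mapDomain (Θ a b :: ·) (qshW Θ u v)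
  termination_by u v => u.length + v.length

/-- Bilinear extension of the quasi-shuffle product. -/
def qshL (Θ : Ω → Ω → Ω) : HW Ω →ₗ[ℂ] HW Ω →ₗ[ℂ] HW Ω :=
  Finsupp.lift (HW Ω →ₗ[ℂ] HW Ω) ℂ (List Ω) fun u =>
    Finsupp.lift (HW Ω) ℂ (List Ω) fun v => qshW Θ u v

/-- Deconcatenation coproduct `Δ(w) = Σ_{uv = w} v ⊗ u`. -/
def deconcat : HW Ω →ₗ[ℂ] HW Ω ⊗[ℂ] HW Ω :=
  Finsupp.lift (HW Ω ⊗[ℂ] HW Ω) ℂ (List Ω) fun w =>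
    ∑ i ∈ Finset.range (w.length + 1),
      Finsupp.single (w.drop i) (1 : ℂ) ⊗ₜ[ℂ] Finsupp.single (w.take i) (1 : ℂ)

/-- The counit `δ_∅`: indicator of the empty word. -/
def counitW : HW Ω →ₗ[ℂ] ℂ :=
  Finsupp.lift ℂ ℂ (List Ω) fun w => match w with | [] => 1 | _ => 0

/-- The convolution product on `Hom(H_W, ℂ)`. -/
def convC (f g : HW Ω →ₗ[ℂ] ℂ) : HW Ω →ₗ[ℂ] ℂ :=
  LinearMap.mul' ℂ ℂ ∘ₗ TensorProduct.map f g ∘ₗ deconcat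

/-- Convolution powers `σ^{⋆k}` with `σ^{⋆0} = 1ε`;  the Feynman rules
`φ = exp_⋆(Lσ)` have `[L^k] φ = σ^{⋆k}/k!`. -/
def convCPow (σ : HW Ω →ₗ[ℂ] ℂ) : ℕ → (HW Ω →ₗ[ℂ] ℂ)
  | 0 => counitW
  | n + 1 => convC σ (convCPow σ n)

/-- `B_+^a`: the linear map prepending the letter `a` to each word. -/
def Bplus (a : Ω) : HW Ω →ₗ[ℂ] HW Ω :=
  Finsupp.lmapDomain ℂ ℂ (a :: ·)

/-- The unit `∅` of the ring `H_W[[α]]`, as coefficient function. -/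
def sone : ℕ → HW Ω := fun n => if n = 0 then Finsupp.single [] 1 else 0

/-- Cauchy product of formal series in `H_W[[α]]`. -/
def smul' (Θ : Ω → Ω → Ω) (f g : ℕ → HW Ω) : ℕ → HW Ω :=
  fun n => ∑ i ∈ Finset.range (n + 1), qshL Θ (f i) (g (n - i))

/-- Powers of a formal series in `H_W[[α]]`. -/
def spow (Θ : Ω → Ω → Ω) (f : ℕ → HW Ω) : ℕ → (ℕ → HW Ω)
  | 0 => sone
  | m + 1 => smul' Θ f (spow Θ f m)

/-- Product of a list of formal series in `H_W[[α]]`. -/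
def sprod (Θ : Ω → Ω → Ω) : List (ℕ → HW Ω) → (ℕ → HW Ω)
  | [] => sone
  | f :: t => smul' Θ f (sprod Θ t)


section Aux

theorem qshW_length_le (Θ : Ω → Ω → Ω) :
    ∀ (u v : List Ω), ∀ w ∈ (qshW Θ u v).support, w.length ≤ u.length + v.length
  | [], v => by
      intro w hw
      rw [qshW] at hw
      have := Finsupp.support_single_subset hw
      simp_all
  | a :: u, [] => by
      intro w hw
      rw [qshW] at hw
      · have := Finsupp.support_single_subset hw
        simp_all
      · simp
  | a :: u, b :: v => by
      classical
      intro w hw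
      rw [qshW] at hw
      have h1 := Finsupp.support_add hw
      rcases Finset.mem_union.mp h1 with h2 | h2
      · rcases Finset.mem_union.mp (Finsupp.support_add h2) with h3 | h3
        · obtain ⟨w', hw', rfl⟩ := Finset.mem_image.mp (Finsupp.mapDomain_support h3)
          have := qshW_length_le Θ u (b :: v) w' hw'
          simp_all; omega
        · obtain ⟨w', hw', rfl⟩ := Finset.mem_image.mp (Finsupp.mapDomain_support h3)
          have := qshW_length_le Θ (a :: u) v w' hw'
          simp_all; omega
      · obtain ⟨w', hw', rfl⟩ := Finset.mem_image.mp (Finsupp.mapDomain_support h2)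
        have := qshW_length_le Θ u v w' hw'
        simp_all; omega
  termination_by u v => u.length + v.length

/-- Submodule of elements supported on words of length at most `n`. -/
def SLen (Ω : Type*) (n : ℕ) : Submodule ℂ (HW Ω) :=
  Finsupp.supported ℂ ℂ {w : List Ω | w.length ≤ n}

theorem single_mem_SLen {w : List Ω} {n : ℕ} (h : w.length ≤ n) (c : ℂ) :
    Finsupp.single w c ∈ SLen Ω n := by
  rw [SLen, Finsupp.mem_supported]
  intro x hx
  have := Finsupp.support_single_subset hx
  simp_all

theorem qshL_single_single (Θ : Ω → Ω → Ω) (u v : List Ω) (r c : ℂ) :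
    qshL Θ (Finsupp.single u r) (Finsupp.single v c) = (r * c) • qshW Θ u v := by
  simp [qshL, Finsupp.lift_apply, Finsupp.sum_single_index, smul_smul]

theorem qshL_mem {Θ : Ω → Ω → Ω} {p q : ℕ} {f g : HW Ω}
    (hf : f ∈ SLen Ω p) (hg : g ∈ SLen Ω q) : qshL Θ f g ∈ SLen Ω (p + q) := by
  rw [SLen, Finsupp.supported_eq_span_single] at hf hg
  induction hf using Submodule.span_induction with
  | zero => simp
  | add x y _ _ hx hy => rw [map_add]; exact Submodule.add_mem _ hx hy
  | smul a x _ hx => rw [map_smul]; exact Submodule.smul_mem _ a hx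
  | mem x hx =>
      obtain ⟨u, hu, rfl⟩ := hx
      induction hg using Submodule.span_induction with
      | zero => simp
      | add x y _ _ hx hy => rw [map_add]; exact Submodule.add_mem _ hx hy
      | smul a x _ hx => rw [map_smul]; exact Submodule.smul_mem _ a hx
      | mem y hy =>
          obtain ⟨v, hv, rfl⟩ := hy
          rw [qshL_single_single]
          refine Submodule.smul_mem _ _ ?_
          rw [SLen, Finsupp.mem_supported]
          intro w hw
          exact le_trans (qshW_length_le Θ u v w hw) (add_le_add hu hv)

theorem qshL_empty (Θ : Ω → Ω → Ω) (g : HW Ω) :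
    qshL Θ (Finsupp.single ([] : List Ω) 1) g = g := by
  have h : qshL Θ (Finsupp.single ([] : List Ω) 1) = LinearMap.id := by
    apply Finsupp.lhom_ext
    intro v c
    rw [qshL_single_single, qshW]
    simp [Finsupp.smul_single]
  rw [h]; rfl

theorem sone_mem (n : ℕ) : (sone n : HW Ω) ∈ SLen Ω n := by
  unfold sone
  split
  · exact single_mem_SLen (by simp) 1
  · exact Submodule.zero_mem _

theorem Bplus_mem {a : Ω} {n : ℕ} {f : HW Ω} (hf : f ∈ SLen Ω n) :
    Bplus a f ∈ SLen Ω (n + 1) := by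
  classical
  rw [SLen, Finsupp.mem_supported] at hf ⊢
  intro w hw
  rw [Bplus, Finsupp.lmapDomain_apply] at hw
  obtain ⟨w', hw', rfl⟩ := Finset.mem_image.mp (Finsupp.mapDomain_support hw)
  have := hf hw'
  simp_all

theorem smul'_mem {Θ : Ω → Ω → Ω} {f g : ℕ → HW Ω} {m : ℕ}
    (hf : ∀ i ≤ m, f i ∈ SLen Ω i) (hg : ∀ i ≤ m, g i ∈ SLen Ω i) :
    smul' Θ f g m ∈ SLen Ω m := by
  refine Submodule.sum_mem _ fun i hi => ?_
  have him : i ≤ m := Nat.lt_succ_iff.mp (Finset.mem_range.mp hi)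
  have := qshL_mem (Θ := Θ) (hf i him) (hg (m - i) (Nat.sub_le m i))
  rwa [Nat.add_sub_cancel' him] at this

theorem spow_mem {Θ : Ω → Ω → Ω} {f : ℕ → HW Ω} {m : ℕ}
    (hf : ∀ i ≤ m, f i ∈ SLen Ω i) (k : ℕ) :
    ∀ i ≤ m, spow Θ f k i ∈ SLen Ω i := by
  induction k with
  | zero => exact fun i _ => sone_mem i
  | succ k ih =>
      intro i hi
      exact smul'_mem (fun j hj => hf j (le_trans hj hi))
        (fun j hj => ih j (le_trans hj hi))

theorem sprod_mem {Θ : Ω → Ω → Ω} {l : List (ℕ → HW Ω)} {m : ℕ}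
    (hl : ∀ h ∈ l, ∀ i ≤ m, h i ∈ SLen Ω i) :
    ∀ i ≤ m, sprod Θ l i ∈ SLen Ω i := by
  induction l with
  | nil => exact fun i _ => sone_mem i
  | cons h t ih =>
      intro i hi
      refine smul'_mem (fun j hj => hl h (by simp) j (le_trans hj hi))
        (fun j hj => ih (fun h' hh' => hl h' (by simp [hh'])) j (le_trans hj hi))

theorem convC_single (f g : HW Ω →ₗ[ℂ] ℂ) (w : List Ω) :
    convC f g (Finsupp.single w 1) =
      ∑ i ∈ Finset.range (w.length + 1),
        f (Finsupp.single (w.drop i) 1) * g (Finsupp.single (w.take i) 1) := by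
  simp [convC, deconcat, Finsupp.lift_apply, Finsupp.sum_single_index, map_sum,
    TensorProduct.map_tmul, LinearMap.mul'_apply]

theorem convCPow_single_zero (σ : HW Ω →ₗ[ℂ] ℂ)
    (hempty : σ (Finsupp.single ([] : List Ω) 1) = 0) :
    ∀ k (w : List Ω), w.length < k → convCPow σ k (Finsupp.single w 1) = 0 := by
  intro k
  induction k with
  | zero => intro w hw; omega
  | succ k ih =>
      intro w hw
      rw [convCPow, convC_single]
      refine Finset.sum_eq_zero fun i hi => ?_
      have him : i ≤ w.length := Nat.lt_succ_iff.mp (Finset.mem_range.mp hi)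
      rcases eq_or_lt_of_le him with h | h
      · rw [h, List.drop_length, hempty, zero_mul]
      · have : (w.take i).length < k := by
          rw [List.length_take]
          omega
        rw [ih _ this, mul_zero]

theorem convCPow_zero_of_mem (σ : HW Ω →ₗ[ℂ] ℂ)
    (hempty : σ (Finsupp.single ([] : List Ω) 1) = 0)
    {n k : ℕ} (hk : n < k) {f : HW Ω} (hf : f ∈ SLen Ω n) :
    convCPow σ k f = 0 := by
  rw [SLen, Finsupp.supported_eq_span_single] at hf
  induction hf using Submodule.span_induction with
  | zero => simp
  | add x y _ _ hx hy => rw [map_add, hx, hy, add_zero]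
  | smul a x _ hx => rw [map_smul, hx, smul_zero]
  | mem x hx =>
      obtain ⟨w, hw, rfl⟩ := hx
      exact convCPow_single_zero σ hempty k w (lt_of_le_of_lt hw hk)

end Aux

/-- **Corollary 3: the log expansion is triangular.**  Let `{X^r = Σ_n w_n^r α^n}`
be a solution of the Dyson–Schwinger system
`X^r = ∅ + sign(η_r)·α·B_+^{a_r}(X^r ⧢_Θ Q)`, `Q = Π_{r'} (X^{r'})^{η_{r'}}`,
and let `φ = exp_⋆(Lσ)` be the Feynman rules of an infinitesimal character `σ`
with `σ(∅) = 0` (so `[L^k] φ = σ^{⋆k}/k!`).  Then for every `r` and `n` the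
coefficient `φ(w_n^r)` of `α^n` in `G^r(α, L)` is a polynomial of degree at
most `n` in `L`: `G^r(α,L) = Σ_{i≥0} Σ_{j=0}^{i} b^r_{i,j} α^i L^j`. -/
theorem log_expansion_is_triangular
    (Ω : Type*) (Θ : Ω → Ω → Ω)
    (hcomm : ∀ a b : Ω, Θ a b = Θ b a)
    (hassoc : ∀ a b c : Ω, Θ (Θ a b) c = Θ a (Θ b c))
    (R : ℕ) (a : Fin R → Ω) (η : Fin R → ℤ) (hη : ∀ r, η r ≠ 0)
    (X Xinv : Fin R → ℕ → HW Ω)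
    (hinv : ∀ r, smul' Θ (X r) (Xinv r) = sone)
    (hX0 : ∀ r, X r 0 = Finsupp.single [] 1)
    (hXsucc : ∀ r n,
      X r (n + 1) =
        ((η r).sign : ℂ) •
          Bplus (a r)
            (smul' Θ (X r)
              (sprod Θ (List.ofFn fun r' : Fin R =>
                spow Θ (if 0 < η r' then X r' else Xinv r') (η r').natAbs))
              n))
    (σ : HW Ω →ₗ[ℂ] ℂ)
    (hinf : ∀ x y : HW Ω,
      σ (qshL Θ x y) = σ x * counitW y + counitW x * σ y)
    (hempty : σ (Finsupp.single ([] : List Ω) 1) = 0) :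
    ∀ (r : Fin R) (n : ℕ),
      (∀ k : ℕ, n < k → convCPow σ k (X r n) = 0) ∧
      ∃ p : Polynomial ℂ,
        p.degree ≤ (n : ℕ) ∧
        ∀ j : ℕ, p.coeff j = (j.factorial : ℂ)⁻¹ * convCPow σ j (X r n) := by
  have key : ∀ n, ∀ r : Fin R, X r n ∈ SLen Ω n ∧ Xinv r n ∈ SLen Ω n := by
    intro n
    induction n using Nat.strong_induction_on with
    | _ n ih =>
      intro r
      have hXn : X r n ∈ SLen Ω n := by
        cases n with
        | zero => rw [hX0]; exact single_mem_SLen (by simp) 1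
        | succ m =>
            rw [hXsucc]
            refine Submodule.smul_mem _ _ (Bplus_mem (smul'_mem ?_ ?_))
            · intro i hi; exact (ih i (by omega) r).1
            · intro i hi
              refine sprod_mem ?_ i hi
              intro h hh j hj
              rw [List.mem_ofFn] at hh
              obtain ⟨r', rfl⟩ := hh
              refine spow_mem ?_ _ j le_rfl
              intro l hl
              split
              · exact (ih l (by omega) r').1
              · exact (ih l (by omega) r').2
      refine ⟨hXn, ?_⟩
      have heq := congrFun (hinv r) n
      simp only [smul'] at heq
      rw [Finset.sum_range_succ'] at heq
      simp only [Nat.sub_zero] at heq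
      rw [hX0, qshL_empty] at heq
      have hXinv : Xinv r n =
          sone n - ∑ i ∈ Finset.range n, qshL Θ (X r (i + 1)) (Xinv r (n - (i + 1))) :=
        eq_sub_of_add_eq' heq
      rw [hXinv]
      refine Submodule.sub_mem _ (sone_mem n) (Submodule.sum_mem _ fun i hi => ?_)
      have hin : i < n := Finset.mem_range.mp hi
      have h1 : X r (i + 1) ∈ SLen Ω (i + 1) := by
        rcases eq_or_lt_of_le (Nat.succ_le_of_lt hin) with h | h
        · rw [Nat.succ_eq_add_one] at h; rw [h]; exact hXn
        · exact (ih (i + 1) h r).1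
      have h2 : Xinv r (n - (i + 1)) ∈ SLen Ω (n - (i + 1)) :=
        (ih (n - (i + 1)) (by omega) r).2
      have := qshL_mem (Θ := Θ) h1 h2
      rwa [Nat.add_sub_cancel' (Nat.succ_le_of_lt hin)] at this
  intro r n
  refine ⟨fun k hk => convCPow_zero_of_mem σ hempty hk (key n r).1, ?_⟩
  refine ⟨∑ j ∈ Finset.range (n + 1),
      Polynomial.monomial j ((j.factorial : ℂ)⁻¹ * convCPow σ j (X r n)), ?_, ?_⟩
  · refine le_trans (Polynomial.degree_sum_le _ _) (Finset.sup_le fun j hj => ?_)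
    refine le_trans (Polynomial.degree_monomial_le _ _) ?_
    exact_mod_cast Nat.lt_succ_iff.mp (Finset.mem_range.mp hj)
  · intro j
    rw [Polynomial.finset_sum_coeff]
    simp only [Polynomial.coeff_monomial]
    rcases le_or_gt j n with hj | hj
    · rw [Finset.sum_eq_single j]
      · simp
      · intro i _ hne; simp [hne]
      · intro h; exact absurd (Finset.mem_range.mpr (by omega)) h
    · have h0 : convCPow σ j (X r n) = 0 :=
        convCPow_zero_of_mem σ hempty hj (key n r).1
      rw [h0, mul_zero]
      refine Finset.sum_eq_zero fun i hi => ?_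
      have hne : i ≠ j := by have := Finset.mem_range.mp hi; omega
      simp [hne]
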